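/- Let ξ = −1/8 and define θ(x) = √3·(x − 1/x)·(−1/8 − 1/((x − 1/x)² + 1)) for real x ≠ 0. Then at z_a = (√7 + √3)/2 one has θ′(z_a) = 0, θ″(z_a) = 0 and θ‴(z_a) = −16·c_a with c_a = (21/256)(14√3 − 9√7); and at z_b = (√7 − √3)/2 one has θ′(z_b) = 0, θ″(z_b) = 0 and θ‴(z_b) = −16·c_b with c_b = (21/256)(14√3 + 9√7). -/

import Mathlib

open Real

noncomputable section

def th0 (x : ℝ) : ℝ := Real.sqrt 3 * (x - 1/x) * (-(1:ℝ)/8 - 1/((x - 1/x)^2 + 1))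
def gg (x : ℝ) : ℝ := x - 1/x
def FF1 (u : ℝ) : ℝ := Real.sqrt 3 * (-(1:ℝ)/8 - (1 - u^2)/((u^2+1)^2))
def FF2 (u : ℝ) : ℝ := -Real.sqrt 3 * (2*u*(u^2-3))/((u^2+1)^3)
def FF3 (u : ℝ) : ℝ := -Real.sqrt 3 * ((6*u^2-6)*(u^2+1) - 12*u^2*(u^2-3))/((u^2+1)^4)
def th1 (x : ℝ) : ℝ := FF1 (gg x) * (1 + 1/x^2)
def th2 (x : ℝ) : ℝ := FF2 (gg x) * (1 + 1/x^2)^2 + FF1 (gg x) * (-2/x^3)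
def th3 (x : ℝ) : ℝ :=
  FF3 (gg x) * (1 + 1/x^2)^3 + 3 * FF2 (gg x) * (1 + 1/x^2) * (-2/x^3) + FF1 (gg x) * (6/x^4)

lemma hasDerivAt_gg {x : ℝ} (hx : x ≠ 0) : HasDerivAt gg (1 + 1/x^2) x := by
  have h := (hasDerivAt_id x).sub (hasDerivAt_inv hx)
  have h2 : gg = fun y : ℝ => y - y⁻¹ := by funext y; simp [gg, one_div]
  rw [h2, show (1 + 1/x^2 : ℝ) = 1 - -(x^2)⁻¹ by field_simp; ring]
  exact h

lemma hasDerivAt_FF1 (u : ℝ) : HasDerivAt FF1 (FF2 u) u := by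
  have hden : ((u^2+1)^2 : ℝ) ≠ 0 := by positivity
  have H := (((hasDerivAt_pow 2 u).const_sub 1).div
      (((hasDerivAt_pow 2 u).add_const 1).pow 2) hden).const_sub (-(1:ℝ)/8)
  have H2 := H.const_mul (Real.sqrt 3)
  refine H2.congr_deriv ?_
  simp only [Pi.pow_apply, Pi.sub_apply, Pi.div_apply]
  unfold FF2
  field_simp
  ring

lemma hasDerivAt_FF2 (u : ℝ) : HasDerivAt FF2 (FF3 u) u := by
  have hden : ((u^2+1)^3 : ℝ) ≠ 0 := by positivity
  have hnum : HasDerivAt (fun v : ℝ => 2*v*(v^2-3)) (2*(u^2-3) + 2*u*(2*u)) u := by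
    have := ((hasDerivAt_id u).const_mul 2).mul ((hasDerivAt_pow 2 u).sub_const 3)
    refine this.congr_deriv ?_
    simp only [id_eq]; push_cast; ring
  have H := (hnum.div (((hasDerivAt_pow 2 u).add_const 1).pow 3) hden).const_mul (-Real.sqrt 3)
  refine HasDerivAt.congr_of_eventuallyEq (H.congr_deriv ?_) (Filter.Eventually.of_forall fun v => ?_)
  swap
  · unfold FF2; rw [mul_div_assoc]; rfl
  simp only [Pi.pow_apply, Pi.sub_apply, Pi.div_apply]
  unfold FF3
  field_simp
  ring

lemma hasDerivAt_th0 {x : ℝ} (hx : x ≠ 0) : HasDerivAt th0 (th1 x) x := by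
  have hg := hasDerivAt_gg hx
  have hne : ((gg x)^2 + 1 : ℝ) ≠ 0 := by positivity
  have hq : HasDerivAt (fun y => (gg y)^2 + 1) ((2:ℕ) * (gg x)^1 * (1+1/x^2)) x :=
    (hg.pow 2).add_const 1
  have hdiv := (hasDerivAt_const x (1:ℝ)).div hq hne
  have H := (hg.const_mul (Real.sqrt 3)).mul ((hasDerivAt_const x (-(1:ℝ)/8)).sub hdiv)
  have hfun : th0 = fun y => (Real.sqrt 3 * gg y) * (-(1:ℝ)/8 - 1/((gg y)^2+1)) := by
    funext y; simp [th0, gg, mul_assoc]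
  rw [hfun]
  refine H.congr_deriv ?_
  simp only [Pi.pow_apply, Pi.sub_apply, Pi.div_apply]
  have hx2 : (x:ℝ)^2 ≠ 0 := pow_ne_zero _ hx
  unfold th1 FF1 gg
  have hne' : ((x - 1/x)^2 + 1 : ℝ) ≠ 0 := by positivity
  field_simp
  ring

lemma hasDerivAt_th1 {x : ℝ} (hx : x ≠ 0) : HasDerivAt th1 (th2 x) x := by
  have hg := hasDerivAt_gg hx
  have hc := (hasDerivAt_FF1 (gg x)).comp x hg
  have hx2 : HasDerivAt (fun y : ℝ => 1 + 1/y^2) (-2/x^3) x := by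
    have hp : ((x:ℝ)^2) ≠ 0 := pow_ne_zero _ hx
    have := (hasDerivAt_const x (1:ℝ)).add
      (((hasDerivAt_const x (1:ℝ)).div (hasDerivAt_pow 2 x) hp))
    refine this.congr_deriv ?_
    field_simp; ring
  have H := hc.mul hx2
  refine H.congr_deriv ?_
  unfold th2
  simp only [Function.comp_apply]
  ring

lemma hasDerivAt_th2 {x : ℝ} (hx : x ≠ 0) : HasDerivAt th2 (th3 x) x := by
  have hg := hasDerivAt_gg hx
  have hc1 := (hasDerivAt_FF1 (gg x)).comp x hg
  have hc2 := (hasDerivAt_FF2 (gg x)).comp x hg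
  have hx2 : HasDerivAt (fun y : ℝ => 1 + 1/y^2) (-2/x^3) x := by
    have hp : ((x:ℝ)^2) ≠ 0 := pow_ne_zero _ hx
    have := (hasDerivAt_const x (1:ℝ)).add
      (((hasDerivAt_const x (1:ℝ)).div (hasDerivAt_pow 2 x) hp))
    refine this.congr_deriv ?_
    field_simp; ring
  have hx3 : HasDerivAt (fun y : ℝ => -2/y^3) (6/x^4) x := by
    have hp : ((x:ℝ)^3) ≠ 0 := pow_ne_zero _ hx
    have := (hasDerivAt_const x (-2:ℝ)).div (hasDerivAt_pow 3 x) hp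
    refine this.congr_deriv ?_
    field_simp; ring
  have H := (hc2.mul (hx2.pow 2)).add (hc1.mul hx3)
  refine H.congr_deriv ?_
  simp only [Pi.pow_apply, Pi.sub_apply, Pi.div_apply]
  unfold th3
  simp only [Function.comp_apply]
  push_cast
  ring

lemma deriv_chain {z : ℝ} (hz : z ≠ 0) :
    deriv th0 z = th1 z ∧ deriv (deriv th0) z = th2 z ∧
      deriv (deriv (deriv th0)) z = th3 z := by
  have hmem : {x : ℝ | x ≠ 0} ∈ nhds z := isOpen_ne.mem_nhds hz
  have e1 : deriv th0 =ᶠ[nhds z] th1 :=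
    Filter.eventuallyEq_of_mem hmem fun y hy => (hasDerivAt_th0 hy).deriv
  have e2 : deriv (deriv th0) =ᶠ[nhds z] th2 := by
    refine e1.deriv.trans ?_
    exact Filter.eventuallyEq_of_mem hmem fun y hy => (hasDerivAt_th1 hy).deriv
  refine ⟨(hasDerivAt_th0 hz).deriv, ?_, ?_⟩
  · rw [e1.deriv_eq]; exact (hasDerivAt_th1 hz).deriv
  · rw [e2.deriv_eq]; exact (hasDerivAt_th2 hz).deriv

lemma h3sq : Real.sqrt 3 ^ 2 = 3 := Real.sq_sqrt (by norm_num)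
lemma h7sq : Real.sqrt 7 ^ 2 = 7 := Real.sq_sqrt (by norm_num)

lemma FF1_eval (u : ℝ) (hu : u^2 = 3) : FF1 u = 0 := by
  unfold FF1; rw [hu]; norm_num

lemma FF2_eval (u : ℝ) (hu : u^2 = 3) : FF2 u = 0 := by
  unfold FF2; rw [hu]; norm_num

lemma FF3_eval (u : ℝ) (hu : u^2 = 3) : FF3 u = -3 * Real.sqrt 3 / 16 := by
  unfold FF3; rw [hu]; norm_num; ring

theorem degenerate_saddle_third_derivative :
    let θ : ℝ → ℝ := fun x => Real.sqrt 3 * (x - 1/x) * (-(1:ℝ)/8 - 1/((x - 1/x)^2 + 1))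
    let za : ℝ := (Real.sqrt 7 + Real.sqrt 3) / 2
    let zb : ℝ := (Real.sqrt 7 - Real.sqrt 3) / 2
    let ca : ℝ := (21/256) * (14 * Real.sqrt 3 - 9 * Real.sqrt 7)
    let cb : ℝ := (21/256) * (14 * Real.sqrt 3 + 9 * Real.sqrt 7)
    (deriv θ za = 0 ∧ deriv (deriv θ) za = 0 ∧ deriv (deriv (deriv θ)) za = -16 * ca) ∧
    (deriv θ zb = 0 ∧ deriv (deriv θ) zb = 0 ∧ deriv (deriv (deriv θ)) zb = -16 * cb) := by
  intro θ za zb ca cb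
  have hθ : θ = th0 := rfl
  set a := Real.sqrt 3 with ha
  set b := Real.sqrt 7 with hb
  have h3 : a ^ 2 = 3 := h3sq
  have h7 : b ^ 2 = 7 := h7sq
  have ha0 : 0 < a := Real.sqrt_pos.mpr (by norm_num)
  have hb0 : 0 < b := Real.sqrt_pos.mpr (by norm_num)
  have hza0 : za ≠ 0 := by positivity
  have hprod : za * zb = 1 := by
    show (b + a)/2 * ((b - a)/2) = 1
    linear_combination h7/4 - h3/4
  have hzb0 : zb ≠ 0 := fun h => by simp [h] at hprod
  have hinva : 1/za = zb := by
    rw [div_eq_iff hza0]; linarith [hprod]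
  have hinvb : 1/zb = za := by
    rw [div_eq_iff hzb0]; nlinarith [hprod]
  have hga : gg za = a := by
    unfold gg; rw [hinva]; show (b+a)/2 - (b-a)/2 = a; ring
  have hgb : gg zb = -a := by
    unfold gg; rw [hinvb]; show (b-a)/2 - (b+a)/2 = -a; ring
  have hua : (gg za)^2 = 3 := by rw [hga]; exact h3
  have hub : (gg zb)^2 = 3 := by rw [hgb]; rw [neg_pow]; simp [h3]
  have hsqa : (1:ℝ)/za^2 = zb^2 := by
    rw [div_eq_iff (pow_ne_zero _ hza0)]; nlinarith [hprod]
  have hsqb : (1:ℝ)/zb^2 = za^2 := by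
    rw [div_eq_iff (pow_ne_zero _ hzb0)]; nlinarith [hprod]
  obtain ⟨d1a, d2a, d3a⟩ := deriv_chain hza0
  obtain ⟨d1b, d2b, d3b⟩ := deriv_chain hzb0
  rw [hθ]
  refine ⟨⟨?_, ?_, ?_⟩, ?_, ?_, ?_⟩
  · rw [d1a]; unfold th1; rw [FF1_eval _ hua]; ring
  · rw [d2a]; unfold th2; rw [FF1_eval _ hua, FF2_eval _ hua]; ring
  · rw [d3a]; unfold th3
    rw [FF1_eval _ hua, FF2_eval _ hua, FF3_eval _ hua, hsqa]
    show -3 * a / 16 * (1 + ((b - a)/2)^2)^3 + 3 * 0 * _ * _ + 0 * _ =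
      -16 * (21/256 * (14 * a - 9 * b))
    linear_combination (441/512*b - 279/1024*a + 81/256*b^3 - 351/1024*a*b^2
        + 99/512*a^2*b - 45/1024*a^3 + 9/512*b^5 - 45/1024*a*b^4 + 15/256*a^2*b^3
        - 45/1024*a^3*b^2 + 9/512*a^4*b - 3/1024*a^5) * h3
      + (-2541/1024*a - 3/16*a*b^2 - 3/1024*a*b^4 + 675/512*b + 27/512*b^3) * h7
  · rw [d1b]; unfold th1; rw [FF1_eval _ hub]; ring
  · rw [d2b]; unfold th2; rw [FF1_eval _ hub, FF2_eval _ hub]; ring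
  · rw [d3b]; unfold th3
    rw [FF1_eval _ hub, FF2_eval _ hub, FF3_eval _ hub, hsqb]
    show -3 * a / 16 * (1 + ((b + a)/2)^2)^3 + 3 * 0 * _ * _ + 0 * _ =
      -16 * (21/256 * (14 * a + 9 * b))
    linear_combination (-441/512*b - 279/1024*a - 81/256*b^3 - 351/1024*a*b^2
        - 99/512*a^2*b - 45/1024*a^3 - 9/512*b^5 - 45/1024*a*b^4 - 15/256*a^2*b^3
        - 45/1024*a^3*b^2 - 9/512*a^4*b - 3/1024*a^5) * h3
      + (-2541/1024*a - 3/16*a*b^2 - 3/1024*a*b^4 - 675/512*b - 27/512*b^3) * h7
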